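/- In the construction of Lemma 'issys': suppose ⟨M_ξ : ξ ≤ ζ⟩ is a sequence of countable elementary substructures of (H(χ), ∈, ≤_χ) such that each γ_ξ is the ξ-th ordinal of M_ξ (counting from 0), each M_{ξ+1} is a minimal (2^{2^{λ_{γ_ξ}}}, λ_{γ_ξ+1})-extension of M_ξ, and M_ξ = ⋃_{η<ξ} M_η at limits ξ. Then for each ξ ≤ ζ, the sequence ⟨γ_η : η ≤ ξ⟩ lists the first ξ+1 ordinals of M_ξ in increasing order. -/

import Mathlib

open ZFSet FirstOrder

namespace P746

/-! ## First-order language with membership and a wellordering predicate -/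

/-- The language with two binary relation symbols: `∈` and a wellordering `<*`. -/
def L : FirstOrder.Language where
  Functions := fun _ => Empty
  Relations := fun n => match n with
    | 2 => Fin 2
    | _ => Empty

/-- The `L`-structure on (the members of) a ZF-set `M`, interpreting the first relation
as membership and the second as a given relation `r`. -/
def mStruc (M : ZFSet) (r : ZFSet → ZFSet → Prop) : L.Structure M.toSet where
  funMap := fun f _ => f.elim
  RelMap := fun {n} => match n with
    | 0 => fun R _ => R.elim
    | 1 => fun R _ => R.elim
    | 2 => fun R v => if (show Fin 2 from R) = (0 : Fin 2) then ((v 0 : ZFSet) ∈ (v 1 : ZFSet)) else r (v 0) (v 1)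
    | (_+3) => fun R _ => R.elim

/-- `X` is an elementary substructure of `(M, ∈, r)`: `X ⊆ M` and every first-order formula
with parameters from `X` holds in `X` iff it holds in `M`. -/
def ElemSub (M : ZFSet) (r : ZFSet → ZFSet → Prop) (X : ZFSet) : Prop :=
  ∃ h : X ⊆ M,
    ∀ (n : ℕ) (φ : L.Formula (Fin n)) (v : Fin n → X.toSet),
      (letI := mStruc M r
       φ.Realize (fun i => (⟨(v i : ZFSet), h (v i).2⟩ : M.toSet))) ↔
      (letI := mStruc X r; φ.Realize v)

/-- `r` is a wellordering of the members of `S`. -/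
def WOn (S : ZFSet) (r : ZFSet → ZFSet → Prop) : Prop :=
  IsWellOrder S.toSet (Subrel r S.toSet)

/-! ## Basic set-theoretic notions inside `ZFSet` -/

/-- `x` is a (von Neumann) ordinal: a transitive set of transitive sets. -/
def IsOrd (x : ZFSet) : Prop :=
  x.IsTransitive ∧ ∀ y ∈ x.toSet, ZFSet.IsTransitive y

/-- `w` is the first uncountable ordinal `ω₁`. -/
def IsOmega1 (w : ZFSet) : Prop :=
  IsOrd w ∧ ¬ w.toSet.Countable ∧ ∀ y ∈ w.toSet, y.toSet.Countable

/-- The set `[x]^{<ω}` of finite subsets of `x`. -/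
noncomputable def finPow (x : ZFSet) : ZFSet :=
  ZFSet.sep (fun a => a.toSet.Finite) x.powerset

/-- The set `[x]^n` of subsets of `x` of size `n`. -/
noncomputable def finPowCard (x : ZFSet) (n : ℕ) : ZFSet :=
  ZFSet.sep (fun a => a.toSet.Finite ∧ a.toSet.ncard = n) x.powerset

/-- `D^X_η`: the set of finite `a ⊆ η` such that `f(a) ∈ X` for every
`f : [η]^{|a|} → ω₁` belonging to `X` (`w` stands for `ω₁`). -/
def Dset (w X η : ZFSet) : Set ZFSet :=
  {a | a ∈ finPow η ∧ ∀ f ∈ X.toSet, ZFSet.IsFunc (finPowCard η a.toSet.ncard) w f →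
    ∀ v : ZFSet, ZFSet.pair a v ∈ f → v ∈ X}

/-- The Skolem hull of `X ∪ z` in `M` (with functions on `[η]^{<ω}`):
`X` together with all values `f(a)` for `f : [η]^{<ω} → M` in `X` and finite `a ⊆ z`. -/
def SkHull (M η X z : ZFSet) : Set ZFSet :=
  X.toSet ∪ {y | ∃ f ∈ X.toSet, ZFSet.IsFunc (finPow η) M f ∧
    ∃ a : ZFSet, a ∈ finPow η ∧ a ⊆ z ∧ ZFSet.pair a y ∈ f}

/-- `x` is hereditarily of cardinality less than `κ`. -/
def HerLt (κ : Cardinal) (x : ZFSet) : Prop :=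
  ZFSet.mem_wf.fix (C := fun _ => Prop)
    (fun y ih => Cardinal.mk y.toSet < κ ∧ ∀ z, ∀ h : z ∈ y, ih z h) x

/-- `H` is the collection `H(κ)` of sets hereditarily of cardinality `< κ`. -/
def IsHCard (κ : Cardinal) (H : ZFSet) : Prop :=
  ∀ x : ZFSet, x ∈ H ↔ HerLt κ x

/-! ## Clubs, stationarity and canonical functions on `ω₁` -/

noncomputable def omega1 : Ordinal.{0} := (Cardinal.aleph 1).ord
noncomputable def omega2 : Ordinal.{0} := (Cardinal.aleph 2).ord

/-- `C` is a club (closed unbounded) subset of `ω₁`. -/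
def IsClub (C : Set Ordinal.{0}) : Prop :=
  C ⊆ Set.Iio omega1 ∧
  (∀ o, o < omega1 → Order.IsSuccLimit o → (∀ b, b < o → ∃ c ∈ C, b ≤ c ∧ c < o) → o ∈ C) ∧
  (∀ b, b < omega1 → ∃ c ∈ C, b < c ∧ c < omega1)

/-- `S` is a stationary subset of `ω₁`. -/
def IsStat (S : Set Ordinal.{0}) : Prop :=
  ∀ C, IsClub C → (S ∩ C).Nonempty

/-- `f ≤ g` on a club. -/
def BddOnClub (f g : Ordinal.{0} → Ordinal.{0}) : Prop :=
  ∃ C, IsClub C ∧ ∀ α ∈ C, f α ≤ g α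

/-- `f < g` on a club. -/
def LtOnClub (f g : Ordinal.{0} → Ordinal.{0}) : Prop :=
  ∃ C, IsClub C ∧ ∀ α ∈ C, f α < g α

/-- `f` is a canonical function for `γ`: it is above every canonical function for every `β < γ`
(mod clubs), and minimally so.  (This is the standard recursive characterization of the
statement that the empty condition in `P(ω₁)/NS_{ω₁}` forces `j(f)(ω₁^V) = γ`.) -/
def Canonical : Ordinal.{0} → (Ordinal.{0} → Ordinal.{0}) → Prop :=
  Ordinal.lt_wf.fix (C := fun _ => (Ordinal.{0} → Ordinal.{0}) → Prop)
    (fun γ ih f =>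
      (∀ β, ∀ hβ : β < γ, ∀ g, ih β hβ g → LtOnClub g f) ∧
      ∀ h : Ordinal.{0} → Ordinal.{0},
        (∀ β, ∀ hβ : β < γ, ∀ g, ih β hβ g → LtOnClub g h) → BddOnClub f h)

/-- Every `f : ω₁ → ω₁` is bounded on a club by a canonical function for some `γ < ω₂`. -/
def Bounding : Prop :=
  ∀ f : Ordinal.{0} → Ordinal.{0}, (∀ α, α < omega1 → f α < omega1) →
    ∃ γ, γ < omega2 ∧ ∃ g, Canonical γ g ∧ BddOnClub f g

/-- `o` is the order type of the set of ordinals `s`: there is a strictly increasing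
enumeration of `s` indexed by the ordinals below `o`. -/
def IsOtypOf (o : Ordinal.{0}) (s : Set Ordinal.{0}) : Prop :=
  ∃ e : Ordinal.{0} → Ordinal.{0},
    (∀ i j, i < j → j < o → e i < e j) ∧
    (∀ i, i < o → e i ∈ s) ∧ ∀ x ∈ s, ∃ i, i < o ∧ e i = x

/-! ## Trees on `ω × ω` and `ω × Ord` (as sets of pairs of lists) -/

def IsTreeN (S : Set (List ℕ × List ℕ)) : Prop :=
  ∀ p ∈ S, p.1.length = p.2.length ∧ ∀ n : ℕ, (p.1.take n, p.2.take n) ∈ S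

def IsTreeO (T : Set (List ℕ × List Ordinal.{0})) : Prop :=
  ∀ p ∈ T, p.1.length = p.2.length ∧ ∀ n : ℕ, (p.1.take n, p.2.take n) ∈ T

/-- Projection of a tree on `ω × ω`. -/
def projN (S : Set (List ℕ × List ℕ)) : Set (ℕ → ℕ) :=
  {x | ∃ y : ℕ → ℕ, ∀ n : ℕ,
    (List.ofFn (fun i : Fin n => x i), List.ofFn (fun i : Fin n => y i)) ∈ S}

/-- Projection of a tree on `ω × Ord`. -/
def projO (T : Set (List ℕ × List Ordinal.{0})) : Set (ℕ → ℕ) :=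
  {x | ∃ y : ℕ → Ordinal.{0}, ∀ n : ℕ,
    (List.ofFn (fun i : Fin n => x i), List.ofFn (fun i : Fin n => y i)) ∈ T}

/-- Projection of the restricted tree `T ↾ (ω × α)`. -/
def projOBelow (T : Set (List ℕ × List Ordinal.{0})) (α : Ordinal.{0}) : Set (ℕ → ℕ) :=
  {x | ∃ y : ℕ → Ordinal.{0}, (∀ i, y i < α) ∧ ∀ n : ℕ,
    (List.ofFn (fun i : Fin n => x i), List.ofFn (fun i : Fin n => y i)) ∈ T}

/-! ## Names, evaluation, and generic extensions -/

open Classical in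
/-- Evaluation of a `P`-name `τ` by a filter `G`:
`val G τ = { val G σ : ∃ p ∈ G, (σ, p) ∈ τ }`, by recursion on rank. -/
noncomputable def val (G : ZFSet) : ZFSet → ZFSet :=
  WellFounded.fix (InvImage.wf ZFSet.rank Ordinal.lt_wf)
    (fun τ ih =>
      ZFSet.sUnion <| ZFSet.sep
        (fun y => ∃ z ∈ τ.toSet,
          if h : ∃ σ, ZFSet.rank σ < ZFSet.rank τ ∧ ∃ p ∈ G.toSet, z = ZFSet.pair σ p
          then y = {ih h.choose h.choose_spec.1}
          else y = ∅)
        (ZFSet.powerset (ZFSet.sUnion (ZFSet.sUnion (ZFSet.sUnion τ)))))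

/-- The universe is a generic extension `V[G]` of the transitive class `V` by the
partial order `(P, ≤)` (with `le` the set of pairs `(p,q)` with `p ≤ q`), `G ⊆ P`
a filter meeting every dense subset of `P` lying in `V`, and every set being the
value of a `P`-name in `V`. -/
def IsGenericExt (V : Set ZFSet) (P le G : ZFSet) : Prop :=
  (∀ x ∈ V, ∀ y, y ∈ x → y ∈ V) ∧ P ∈ V ∧ le ∈ V ∧
  (∀ p, p ∈ P → ZFSet.pair p p ∈ le) ∧
  (∀ p q z, ZFSet.pair p q ∈ le → ZFSet.pair q z ∈ le → ZFSet.pair p z ∈ le) ∧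
  (∀ p q, ZFSet.pair p q ∈ le → p ∈ P ∧ q ∈ P) ∧
  G ⊆ P ∧ G ≠ ∅ ∧
  (∀ p q, p ∈ G → q ∈ G → ∃ r, r ∈ G ∧ ZFSet.pair r p ∈ le ∧ ZFSet.pair r q ∈ le) ∧
  (∀ p q, p ∈ G → q ∈ P → ZFSet.pair p q ∈ le → q ∈ G) ∧
  (∀ D, D ∈ V → D ⊆ P → (∀ p, p ∈ P → ∃ q, q ∈ D ∧ ZFSet.pair q p ∈ le) →
    ∃ q, q ∈ G ∧ q ∈ D) ∧
  (∀ x : ZFSet, ∃ τ, τ ∈ V ∧ x = val G τ)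

/-- In the generic extension, the forcing added no new `ω`-sequences of ordinals;
i.e. `P` is `(ω, ∞)`-distributive. -/
def Distributive (V : Set ZFSet) : Prop :=
  ∀ f o : ZFSet, (o.IsTransitive ∧ ∀ y ∈ o.toSet, ZFSet.IsTransitive y) →
    ZFSet.IsFunc ZFSet.omega o f → f ∈ V

/-! ## Ultrafilters and completeness -/

/-- `U` is an ultrafilter on the set `S`. -/
def IsUltraOn (S U : ZFSet) : Prop :=
  U ⊆ S.powerset ∧ S ∈ U ∧ (∅ : ZFSet) ∉ U ∧
  (∀ A B, A ∈ U → A ⊆ B → B ⊆ S → B ∈ U) ∧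
  (∀ A B, A ∈ U → B ∈ U → A ∩ B ∈ U) ∧
  (∀ A, A ⊆ S → (A ∈ U ∨ ZFSet.sep (fun x => x ∉ A) S ∈ U))

/-- `U` is `γ`-complete with respect to families of members of `U` lying in `W`. -/
def CompleteOn (W : Set ZFSet) (γ : Cardinal.{1}) (S U : ZFSet) : Prop :=
  ∀ F, F ∈ W → F ≠ ∅ → F ⊆ U → Cardinal.mk F.toSet < γ →
    ZFSet.sep (fun x => ∀ A ∈ F.toSet, x ∈ A) S ∈ U

/-! ## Internal finite sequences, trees and homogeneity -/

/-- The set `κ^{<ω}` of finite sequences from `κ` (functions `n → κ`, `n < ω`). -/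
noncomputable def seqs (κ : ZFSet) : ZFSet :=
  ZFSet.sep (fun f => ∃ n, n ∈ ZFSet.omega ∧ ZFSet.IsFunc n κ f)
    (((κ ∪ ZFSet.omega).powerset.powerset).powerset)

/-- The set of functions `a → b` as a ZF-set. -/
noncomputable def funsZ (a b : ZFSet) : ZFSet :=
  ZFSet.sep (fun f => ZFSet.IsFunc a b f) (((a ∪ b).powerset.powerset).powerset)

/-- Restriction of a (set-)function `f` to `m`. -/
noncomputable def restr (f m : ZFSet) : ZFSet :=
  ZFSet.sep (fun p => ∃ i v, i ∈ m ∧ p = ZFSet.pair i v) f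

/-- `T` is a tree on `ω × κ`: a set of pairs of finite sequences of equal length,
closed under restriction. -/
def IsTreeZ (κ T : ZFSet) : Prop :=
  ∀ z, z ∈ T → ∃ n s t, n ∈ ZFSet.omega ∧ ZFSet.IsFunc n ZFSet.omega s ∧
    ZFSet.IsFunc n κ t ∧ z = ZFSet.pair s t ∧
    ∀ m, m ∈ n → ZFSet.pair (restr s m) (restr t m) ∈ T

/-- `x ∈ p[T]`, computed in `W`: there is a branch witness `y ∈ W`. -/
def inProjZ (W : Set ZFSet) (κ T x : ZFSet) : Prop :=
  ∃ y, y ∈ W ∧ ZFSet.IsFunc ZFSet.omega κ y ∧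
    ∀ n, n ∈ ZFSet.omega → ZFSet.pair (restr x n) (restr y n) ∈ T

/-- `x ∈ p[T ↾ (ω × A)]` where the branch takes values satisfying `Q`. -/
def inProjVal (κ T x : ZFSet) (Q : ZFSet → Prop) : Prop :=
  ∃ y, ZFSet.IsFunc ZFSet.omega κ y ∧ (∀ i v, ZFSet.pair i v ∈ y → Q v) ∧
    ∀ n, n ∈ ZFSet.omega → ZFSet.pair (restr x n) (restr y n) ∈ T

/-- The tower `⟨π(x ↾ k) : k < ω⟩` is countably complete, relativized to `W`. -/
def CCTower (W : Set ZFSet) (κ π x : ZFSet) : Prop :=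
  ∀ Af, Af ∈ W → ZFSet.IsFunc ZFSet.omega ((seqs κ).powerset) Af →
    (∀ n U a, n ∈ ZFSet.omega → ZFSet.pair (restr x n) U ∈ π →
      ZFSet.pair n a ∈ Af → a ∈ U) →
    ∃ y, y ∈ W ∧ ZFSet.IsFunc ZFSet.omega κ y ∧
      ∀ n a, n ∈ ZFSet.omega → ZFSet.pair n a ∈ Af → restr y n ∈ a

/-- `(T, π)` is a `γ`-homogeneous tree system on `ω × κ`, relativized to the class `W`. -/
def HomSys (W : Set ZFSet) (γ : Cardinal.{1}) (κ T π : ZFSet) : Prop :=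
  IsTreeZ κ T ∧
  (∀ z, z ∈ π → ∃ n s U, n ∈ ZFSet.omega ∧ ZFSet.IsFunc n ZFSet.omega s ∧
    z = ZFSet.pair s U ∧ IsUltraOn (funsZ n κ) U ∧ CompleteOn W γ (funsZ n κ) U ∧
    ZFSet.sep (fun t => ZFSet.pair s t ∈ T) (funsZ n κ) ∈ U) ∧
  (∀ s U U', ZFSet.pair s U ∈ π → ZFSet.pair s U' ∈ π → U = U') ∧
  (∀ x, x ∈ W → ZFSet.IsFunc ZFSet.omega ZFSet.omega x →
    (inProjZ W κ T x ↔
      ((∀ n, n ∈ ZFSet.omega → ∃ U, ZFSet.pair (restr x n) U ∈ π) ∧ CCTower W κ π x)))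

/-- `A` is a `γ`-homogeneously Suslin set of reals, in the sense of the class `W`. -/
def HomSuslinIn (W : Set ZFSet) (γ : Cardinal.{1}) (A : ZFSet) : Prop :=
  A ⊆ funsZ ZFSet.omega ZFSet.omega ∧
  ∃ κ T π, κ ∈ W ∧ T ∈ W ∧ π ∈ W ∧
    (κ.IsTransitive ∧ ∀ y ∈ κ.toSet, ZFSet.IsTransitive y) ∧
    HomSys W γ κ T π ∧
    ∀ x, ZFSet.IsFunc ZFSet.omega ZFSet.omega x → (x ∈ A ↔ inProjZ W κ T x)


/-! ## Additional notions -/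

/-- `γ` is a regular (limit) cardinal, as a ZF-set ordinal: the range of any function
from a smaller ordinal into `γ` is bounded. -/
def IsRegOrd (γ : ZFSet) : Prop :=
  IsOrd γ ∧ (∀ o ∈ γ.toSet, ∃ o' ∈ γ.toSet, o ∈ o') ∧
  ∀ b f, b ∈ γ → ZFSet.IsFunc b γ f → ∃ o ∈ γ.toSet, ∀ x v, ZFSet.pair x v ∈ f → v ∈ o

/-- `Y` is a minimal `(η, λ)`-extension of `X` (inside the model `M` with wellordering `r`):
`Y ≺ M`, `Y ∩ η = X ∩ η`, and `Y` is the Skolem hull of `X ∪ A` for some `A ⊆ λ`. -/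
def IsMinExt (M : ZFSet) (r : ZFSet → ZFSet → Prop) (η lam X Y : ZFSet) : Prop :=
  ElemSub M r Y ∧ Y ∩ η = X ∩ η ∧ ∃ A : ZFSet, A ⊆ lam ∧ Y.toSet = SkHull M lam X A

/-- `U` is a normal measure on the (measurable) cardinal `λ`. -/
def IsNormalMeasure (lam U : ZFSet) : Prop :=
  IsOrd lam ∧ IsUltraOn lam U ∧
  CompleteOn Set.univ (Cardinal.mk lam.toSet) lam U ∧
  (∀ x, x ∈ lam → ({x} : ZFSet) ∉ U) ∧
  ∀ f A, A ∈ U → ZFSet.IsFunc lam lam f →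
    (∀ x v, x ∈ A → ZFSet.pair x v ∈ f → (v ∈ x ∨ x = ∅)) →
    ∃ B c, B ∈ U ∧ ∀ x, x ∈ B → ZFSet.pair x c ∈ f

/-- `g` is the `ξ`-th ordinal of `M` (counting from `0`): the ordinals of `M` below `g`
have order type `ξ`. -/
def NthOrdOf (M : ZFSet) (ξ : Ordinal.{0}) (g : ZFSet) : Prop :=
  IsOrd g ∧ g ∈ M ∧
  IsOtypOf ξ (ZFSet.rank '' {x : ZFSet | x ∈ M.toSet ∧ IsOrd x ∧ x ∈ g})

/-- The relation `≤_o` on a tree `T` on `ω × ω₁`: one sequence extends the other, and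
the first coordinate of the last element of the longer one codes that the length of the
first is below the length of the second in the coded ordering.  (`decode k m n` means:
the value `k` codes `m` before `n`.) -/
def leO (T : Set (List ℕ × List Ordinal.{0})) (decode : ℕ → ℕ → ℕ → Prop)
    (p q : List ℕ × List Ordinal.{0}) : Prop :=
  p ∈ T ∧ q ∈ T ∧
  ((p.1 <+: q.1 ∧ p.2 <+: q.2 ∧ p.1.length < q.1.length ∧
      decode (q.1.getD (q.1.length - 1) 0) p.1.length q.1.length) ∨
   (q.1 <+: p.1 ∧ q.2 <+: p.2 ∧ q.1.length < p.1.length ∧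
      decode (p.1.getD (p.1.length - 1) 0) p.1.length q.1.length))

/-- The binary relation on `ω` coded by `x : ω → ω`:  comparisons of `n` with smaller
numbers are decided by `x (n - 1)`. -/
def codedRel (decode : ℕ → ℕ → ℕ → Prop) (x : ℕ → ℕ) (m n : ℕ) : Prop :=
  (m < n ∧ decode (x (n - 1)) m n) ∨ (n < m ∧ decode (x (m - 1)) m n)


lemma ZFSet.mem_toSet (a u : ZFSet) : a ∈ u.toSet ↔ a ∈ u :=
  Iff.rfl

lemma isOrd_of_mem {x y : ZFSet} (hx : IsOrd x) (hy : y ∈ x) : IsOrd y := by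
  refine ⟨hx.2 y ((ZFSet.mem_toSet _ _).2 hy), fun z hz => ?_⟩
  exact hx.2 z ((ZFSet.mem_toSet _ _).2 (hx.1.mem_trans ((ZFSet.mem_toSet _ _).1 hz) hy))

lemma ord_rank_key : ∀ o : Ordinal, ∀ x y : ZFSet, IsOrd x → IsOrd y → x.rank = o →
    (y.rank < o → y ∈ x) ∧ (y.rank = o → y = x) := by
  intro o
  induction o using Ordinal.induction with
  | _ o ih =>
  have mem : ∀ x y : ZFSet, IsOrd x → IsOrd y → x.rank = o → y.rank < o → y ∈ x := by
    intro x y hx hy hxo hyo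
    subst hxo
    obtain ⟨w, hwx, hw⟩ := ZFSet.lt_rank_iff.1 hyo
    have hword : IsOrd w := isOrd_of_mem hx hwx
    rcases lt_or_eq_of_le hw with h | h
    · exact hx.1.mem_trans ((ih _ (ZFSet.rank_lt_of_mem hwx) w y hword hy rfl).1 h) hwx
    · rw [(ih _ (ZFSet.rank_lt_of_mem hwx) w y hword hy rfl).2 h]
      exact hwx
  refine fun x y hx hy hxo => ⟨mem x y hx hy hxo, fun hyo => ?_⟩
  apply ZFSet.ext; intro z
  constructor
  · intro hz
    exact mem x z hx (isOrd_of_mem hy hz) hxo (hyo ▸ ZFSet.rank_lt_of_mem hz)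
  · intro hz
    exact mem y z hy (isOrd_of_mem hx hz) hyo (hxo ▸ ZFSet.rank_lt_of_mem hz)

lemma mem_of_rank_lt {x y : ZFSet} (hx : IsOrd x) (hy : IsOrd y)
    (h : y.rank < x.rank) : y ∈ x :=
  (ord_rank_key x.rank x y hx hy rfl).1 h

/-- If a strictly increasing `e` maps `Iio o₁` into `s`, and `s` has order type `o₂`,
then `o₁ ≤ o₂`. -/
lemma otyp_le {o₁ o₂ : Ordinal} {s : Set Ordinal} (e : Ordinal → Ordinal)
    (hinc : ∀ i j, i < j → j < o₁ → e i < e j)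
    (hmem : ∀ i, i < o₁ → e i ∈ s)
    (h₂ : IsOtypOf o₂ s) : o₁ ≤ o₂ := by
  obtain ⟨e₂, hinc₂, _hmem₂, hsurj₂⟩ := h₂
  by_contra hcon
  push_neg at hcon
  have key : ∀ i, i < o₁ → ∃ j, j < o₂ ∧ e₂ j = e i := fun i hi => hsurj₂ _ (hmem i hi)
  choose f hf1 hf2 using key
  have fmono : ∀ i j (hi : i < o₁) (hj : j < o₁), i < j → f i hi < f j hj := by
    intro i j hi hj hij
    rcases lt_trichotomy (f i hi) (f j hj) with h | h | h
    · exact h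
    · exfalso
      have h' := hinc i j hij hj
      rw [← hf2 i hi, ← hf2 j hj, h] at h'
      exact lt_irrefl _ h'
    · exfalso
      have h1 := hinc₂ _ _ h (hf1 i hi)
      rw [hf2 i hi, hf2 j hj] at h1
      exact lt_asymm (hinc i j hij hj) h1
  have self : ∀ i, ∀ hi : i < o₁, i ≤ f i hi := by
    intro i
    induction i using Ordinal.induction with
    | _ i ihh =>
    intro hi
    by_contra hc
    push_neg at hc
    exact absurd ((ihh _ hc (hc.trans hi)).trans_lt (fmono _ _ (hc.trans hi) hi hc))
      (lt_irrefl _)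
  exact absurd ((self o₂ hcon).trans_lt (hf1 o₂ hcon)) (lt_irrefl _)

/-- If `g` is the `η`-th and `G` the `ξ`-th ordinal of `N` with `η ≤ ξ`, then
`rank g ≤ rank G`. -/
lemma nth_rank_mono {N g G : ZFSet} {η ξ : Ordinal} (hg : NthOrdOf N η g)
    (hG : NthOrdOf N ξ G) (hle : η ≤ ξ) : g.rank ≤ G.rank := by
  by_contra h
  push_neg at h
  have hGg : G ∈ g := mem_of_rank_lt hg.1 hG.1 h
  obtain ⟨hOg, hgN, hot_g⟩ := hg
  obtain ⟨hOG, hGN, hot_G⟩ := hG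
  obtain ⟨e, hincG, hmemG, _⟩ := hot_G
  set e' : Ordinal → Ordinal := fun i => if i = ξ then G.rank else e i with he'
  have hlt1 : ξ < ξ + 1 := by rw [Ordinal.add_one_eq_succ]; exact Order.lt_succ ξ
  have key : ξ + 1 ≤ η := by
    refine otyp_le e' ?_ ?_ hot_g
    · intro i j hij hj
      have hjle : j ≤ ξ := by
        rw [Ordinal.add_one_eq_succ] at hj; exact Order.lt_succ_iff.1 hj
      rcases lt_or_eq_of_le hjle with hjlt | rfl
      · have hi : i ≠ ξ := (hij.trans hjlt).ne
        have hjne : j ≠ ξ := hjlt.ne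
        simp only [he', hi, hjne, if_false]
        exact hincG i j hij hjlt
      · have hi : i ≠ j := hij.ne
        simp only [he', hi, if_false, if_pos rfl]
        obtain ⟨x, hx, hex⟩ := hmemG i hij
        rw [← hex]
        exact ZFSet.rank_lt_of_mem hx.2.2
    · intro i hi
      have hile : i ≤ ξ := by
        rw [Ordinal.add_one_eq_succ] at hi; exact Order.lt_succ_iff.1 hi
      rcases lt_or_eq_of_le hile with hilt | rfl
      · simp only [he', hilt.ne, if_false]
        obtain ⟨x, hx, hex⟩ := hmemG i hilt
        exact ⟨x, ⟨hx.1, hx.2.1, hOg.1.mem_trans hx.2.2 hGg⟩, hex⟩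
      · simp only [he', if_pos rfl]
        exact ⟨G, ⟨(ZFSet.mem_toSet _ _).2 hGN, hOG, hGg⟩, rfl⟩
  rw [Ordinal.add_one_eq_succ, Order.succ_le_iff] at key
  exact absurd (hle.trans_lt key) (lt_irrefl _)

theorem stmt_17 (χ : Cardinal.{1}) (Hs : ZFSet) (hH : IsHCard χ Hs)
    (r : ZFSet → ZFSet → Prop) (hr : WOn Hs r)
    (lam : Ordinal.{0} → ZFSet)
    (hlamord : ∀ ρ, IsOrd (lam ρ) ∧ (Cardinal.mk (lam ρ).toSet).IsStrongLimit)
    (hlaminc : ∀ ρ ρ', ρ < ρ' → lam ρ ∈ lam ρ')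
    (hlamcont : ∀ ρ, Order.IsSuccLimit ρ → (lam ρ).toSet = ⋃ ρ' ∈ Set.Iio ρ, (lam ρ').toSet)
    (ζ : Ordinal.{0}) (M : Ordinal.{0} → ZFSet) (γ : Ordinal.{0} → ZFSet)
    (eta : Ordinal.{0} → ZFSet)
    (hM : ∀ ξ, ξ ≤ ζ → ElemSub Hs r (M ξ) ∧ (M ξ).toSet.Countable)
    (hγ : ∀ ξ, ξ ≤ ζ → NthOrdOf (M ξ) ξ (γ ξ))
    (heta : ∀ ξ, ξ < ζ → IsOrd (eta ξ) ∧
      Cardinal.mk (eta ξ).toSet = (2 : Cardinal.{1}) ^ ((2 : Cardinal.{1}) ^ Cardinal.mk (lam (ZFSet.rank (γ ξ))).toSet))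
    (hsucc : ∀ ξ, ξ < ζ →
      IsMinExt Hs r (eta ξ) (lam (ZFSet.rank (γ ξ) + 1)) (M ξ) (M (ξ + 1)))
    (hlim : ∀ ξ, ξ ≤ ζ → Order.IsSuccLimit ξ → (M ξ).toSet = ⋃ η ∈ Set.Iio ξ, (M η).toSet) :
    ∀ ξ, ξ ≤ ζ → ∀ η, η ≤ ξ → NthOrdOf (M ξ) η (γ η) := by
  classical
  -- monotonicity of the chain of models
  have hmono : ∀ ξ, ξ ≤ ζ → ∀ η, η ≤ ξ → ∀ x : ZFSet, x ∈ M η → x ∈ M ξ := by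
    intro ξ
    induction ξ using Ordinal.induction with
    | _ ξ ih =>
    intro hξζ η hηξ x hx
    rcases eq_or_lt_of_le hηξ with rfl | hlt
    · exact hx
    rcases Ordinal.zero_or_succ_or_isSuccLimit ξ with h0 | ⟨σ, hs⟩ | hLim
    · rw [h0] at hlt; exact absurd hlt (not_lt_zero (a := η))
    · have hξeq : ξ = σ + 1 := by rw [← hs, Ordinal.add_one_eq_succ]
      subst hξeq
      have hσξ : σ < σ + 1 := by rw [Ordinal.add_one_eq_succ]; exact Order.lt_succ σ
      have hσζ : σ < ζ := hσξ.trans_le hξζ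
      have hησ : η ≤ σ := by
        rw [Ordinal.add_one_eq_succ] at hlt; exact Order.lt_succ_iff.1 hlt
      have hxσ : x ∈ M σ := ih σ hσξ hσζ.le η hησ x hx
      obtain ⟨_, _, A, _, hSk⟩ := hsucc σ hσζ
      have : x ∈ (M (σ + 1)).toSet := by
        rw [hSk]
        exact Or.inl ((ZFSet.mem_toSet _ _).2 hxσ)
      exact (ZFSet.mem_toSet _ _).1 this
    · have : x ∈ (M ξ).toSet := by
        rw [hlim ξ hξζ hLim]
        exact Set.mem_biUnion hlt ((ZFSet.mem_toSet _ _).2 hx)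
      exact (ZFSet.mem_toSet _ _).1 this
  -- from the trace property at a stage, derive the conclusion at that stage
  have build : ∀ ξ, ξ ≤ ζ →
      (∀ η, η ≤ ξ → ∀ x : ZFSet, x ∈ M ξ → IsOrd x → x ∈ γ η → x ∈ M η) →
      ∀ η, η ≤ ξ → NthOrdOf (M ξ) η (γ η) := by
    intro ξ hξζ htr η hηξ
    obtain ⟨hO, hmem, hot⟩ := hγ η (hηξ.trans hξζ)
    refine ⟨hO, hmono ξ hξζ η hηξ _ hmem, ?_⟩
    have hset : {x : ZFSet | x ∈ (M ξ).toSet ∧ IsOrd x ∧ x ∈ γ η} =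
        {x : ZFSet | x ∈ (M η).toSet ∧ IsOrd x ∧ x ∈ γ η} := by
      ext x
      simp only [Set.mem_setOf_eq, ZFSet.mem_toSet]
      exact ⟨fun ⟨h1, h2, h3⟩ => ⟨htr η hηξ x h1 h2 h3, h2, h3⟩,
             fun ⟨h1, h2, h3⟩ => ⟨hmono ξ hξζ η hηξ x h1, h2, h3⟩⟩
    rw [hset]
    exact hot
  -- the trace property, by induction
  have htrace : ∀ ξ, ξ ≤ ζ → ∀ η, η ≤ ξ → ∀ x : ZFSet,
      x ∈ M ξ → IsOrd x → x ∈ γ η → x ∈ M η := by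
    intro ξ
    induction ξ using Ordinal.induction with
    | _ ξ ih =>
    intro hξζ η hηξ x hxM hxO hxγ
    rcases eq_or_lt_of_le hηξ with rfl | hlt
    · exact hxM
    rcases Ordinal.zero_or_succ_or_isSuccLimit ξ with h0 | ⟨σ, hs⟩ | hLim
    · rw [h0] at hlt; exact absurd hlt (not_lt_zero (a := η))
    · -- successor step
      have hξeq : ξ = σ + 1 := by rw [← hs, Ordinal.add_one_eq_succ]
      subst hξeq
      have hσξ : σ < σ + 1 := by rw [Ordinal.add_one_eq_succ]; exact Order.lt_succ σ
      have hσζ : σ < ζ := hσξ.trans_le hξζ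
      have hησ : η ≤ σ := by
        rw [Ordinal.add_one_eq_succ] at hlt; exact Order.lt_succ_iff.1 hlt
      have htrσ := ih σ hσξ hσζ.le
      have hNη : NthOrdOf (M σ) η (γ η) := build σ hσζ.le htrσ η hησ
      have hNσ : NthOrdOf (M σ) σ (γ σ) := hγ σ hσζ.le
      have hrankγ : (γ η).rank ≤ (γ σ).rank := nth_rank_mono hNη hNσ hησ
      have hρ : (γ σ).rank ≤ (lam ((γ σ).rank)).rank := by
        have hsm : StrictMono fun ρ => (lam ρ).rank :=
          fun a b h => ZFSet.rank_lt_of_mem (hlaminc a b h)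
        exact hsm.le_apply
      have hlamOrd : IsOrd (lam ((γ σ).rank)) := (hlamord ((γ σ).rank)).1
      have hetaO : IsOrd (eta σ) := (heta σ hσζ).1
      have hcard := (heta σ hσζ).2
      have hlamEta : (lam ((γ σ).rank)).rank < (eta σ).rank := by
        by_contra hcon
        push_neg at hcon
        have hsub : (eta σ).toSet ⊆ (lam ((γ σ).rank)).toSet := by
          intro z hz
          rw [ZFSet.mem_toSet] at hz ⊢
          exact mem_of_rank_lt hlamOrd (isOrd_of_mem hetaO hz)
            ((ZFSet.rank_lt_of_mem hz).trans_le hcon)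
        have hle := Cardinal.mk_le_mk_of_subset hsub
        rw [hcard] at hle
        set c := Cardinal.mk (lam ((γ σ).rank)).toSet with hc
        have h1 : c < (2 : Cardinal.{1}) ^ ((2 : Cardinal.{1}) ^ c) :=
          lt_of_lt_of_le (Cardinal.cantor c)
            (Cardinal.power_le_power_left two_ne_zero (Cardinal.cantor c).le)
        exact absurd hle (not_le.2 h1)
      have hxeta : x ∈ eta σ := by
        refine mem_of_rank_lt hetaO hxO ?_
        exact ((ZFSet.rank_lt_of_mem hxγ).trans_le hrankγ).trans (hρ.trans_lt hlamEta)
      obtain ⟨_, hcap, _⟩ := hsucc σ hσζ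
      have hxσ : x ∈ M σ := by
        have hmem' : x ∈ M (σ + 1) ∩ eta σ := ZFSet.mem_inter.2 ⟨hxM, hxeta⟩
        rw [hcap] at hmem'
        exact (ZFSet.mem_inter.1 hmem').1
      exact htrσ η hησ x hxσ hxO hxγ
    · -- limit step
      have hxU : x ∈ (M ξ).toSet := (ZFSet.mem_toSet _ _).2 hxM
      rw [hlim ξ hξζ hLim] at hxU
      obtain ⟨η', hη', hxη'⟩ := Set.mem_iUnion₂.1 hxU
      have hη'ξ : η' < ξ := hη'
      have hxη'' : x ∈ M η' := (ZFSet.mem_toSet _ _).1 hxη'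
      have hμξ : max η η' < ξ := max_lt hlt hη'ξ
      have hxμ : x ∈ M (max η η') :=
        hmono (max η η') (hμξ.le.trans hξζ) η' (le_max_right _ _) x hxη''
      exact ih (max η η') hμξ (hμξ.le.trans hξζ) η (le_max_left _ _) x hxμ hxO hxγ
  intro ξ hξζ η hηξ
  exact build ξ hξζ (htrace ξ hξζ) η hηξ

end P746
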